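/- Let X be a completely regular (Tychonoff) locally-P space, where P is a closed hereditary topological property. Then X ⊆ λ_P X, where λ_P X = ⋃{ int_{βX} cl_{βX} C : C is a cozero-set of X and cl_X C has P }. -/

import Mathlib

universe u

/-- A topological property: a predicate on topological spaces invariant under homeomorphism. -/
def TopInvariant (P : ∀ (X : Type u) [TopologicalSpace X], Prop) : Prop :=
  ∀ (X Y : Type u) [TopologicalSpace X] [TopologicalSpace Y], X ≃ₜ Y → P X → P Y

/-- `P` is closed hereditary: any closed subspace of a space with `P` also has `P`. -/
def ClosedHereditary (P : ∀ (X : Type u) [TopologicalSpace X], Prop) : Prop :=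
  ∀ (X : Type u) [TopologicalSpace X] (s : Set X), IsClosed s → P X → P s

/-- `C` is a cozero-set of `X`: the complement of the zero-set of a continuous real-valued
function on `X`. -/
def IsCozero (X : Type u) [TopologicalSpace X] (C : Set X) : Prop :=
  ∃ f : X → ℝ, Continuous f ∧ C = {x | f x ≠ 0}

/-- The subset `λ_P X` of the Stone–Čech compactification `βX`:
the union of the sets `int_{βX} cl_{βX} C` over all cozero-sets `C` of `X`
whose closure in `X` has `P`. -/
def lambdaSet (P : ∀ (X : Type u) [TopologicalSpace X], Prop)
    (X : Type u) [TopologicalSpace X] : Set (StoneCech X) :=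
  ⋃ C ∈ {C : Set X | IsCozero X C ∧ P ↥(closure C)},
    interior (closure (stoneCechUnit '' C))

/-- A subset of a set, as a subtype of the subtype, is homeomorphic to itself. -/
noncomputable def subsetHomeomorph {X : Type u} [TopologicalSpace X] {s t : Set X}
    (hst : s ⊆ t) : ↥(Subtype.val ⁻¹' s : Set ↥t) ≃ₜ ↥s := by
  refine (Topology.IsEmbedding.toHomeomorph (f := (Subtype.val : ↥t → X) ∘ Subtype.val)
    (Topology.IsEmbedding.subtypeVal.comp Topology.IsEmbedding.subtypeVal)).trans (Homeomorph.setCongr ?_)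
  rw [Set.range_comp, Subtype.range_val, Subtype.image_preimage_coe]
  exact Set.inter_eq_self_of_subset_right hst

theorem subset_lambdaSet_of_locallyP
    (P : ∀ (X : Type u) [TopologicalSpace X], Prop)
    (hPinv : TopInvariant P) (hPch : ClosedHereditary P)
    (X : Type u) [TopologicalSpace X] [T35Space X]
    (hloc : ∀ x : X, ∃ N ∈ nhds x, P ↥N) :
    Set.range (stoneCechUnit : X → StoneCech X) ⊆ lambdaSet P X := by
  rintro _ ⟨x, rfl⟩
  obtain ⟨N, hN, hPN⟩ := hloc x
  have hxint : x ∈ interior N := mem_interior_iff_mem_nhds.mpr hN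
  obtain ⟨f, hf, hfx, hfK⟩ := CompletelyRegularSpace.completely_regular x (interior N)ᶜ
    isOpen_interior.isClosed_compl (by simpa using hxint)
  -- the cozero set
  set C : Set X := {y | (f y : ℝ) < 1/2} with hC
  have hCcoz : IsCozero X C := by
    refine ⟨fun y => max (1/2 - (f y : ℝ)) 0, by fun_prop, ?_⟩
    ext y
    simp only [hC, Set.mem_setOf_eq, ne_eq]
    rw [max_eq_right_iff.not]
    constructor
    · intro h h'; linarith
    · intro h; linarith [lt_of_not_ge h]
  -- closure C ⊆ N
  have hclC : closure C ⊆ N := by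
    have h1 : closure C ⊆ {y | (f y : ℝ) ≤ 1/2} :=
      closure_minimal (fun y hy => show (f y : ℝ) ≤ 1/2 from le_of_lt hy)
        (isClosed_le (by fun_prop) continuous_const)
    intro y hy
    have : y ∈ interior N := by
      by_contra h
      have h2 : (f y : ℝ) = 1 := by simp [hfK h]
      have := h1 hy
      rw [Set.mem_setOf_eq, h2] at this; linarith
    exact interior_subset this
  -- P (closure C)
  have hPclC : P ↥(closure C) := by
    have hcl : IsClosed (Subtype.val ⁻¹' closure C : Set ↥N) :=
      isClosed_closure.preimage continuous_subtype_val
    have := hPch ↥N _ hcl hPN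
    exact hPinv _ _ (subsetHomeomorph hclC) this
  -- the open set in βX
  have hfc : Continuous f := hf
  set F := stoneCechExtend hfc with hF
  have hFc : Continuous F := continuous_stoneCechExtend hfc
  set U : Set (StoneCech X) := {z | (F z : ℝ) < 1/2} with hU
  have hUopen : IsOpen U := isOpen_lt (by fun_prop) continuous_const
  have hFx : F (stoneCechUnit x) = f x := congrFun (stoneCechExtend_extends hfc) x
  have hxU : stoneCechUnit x ∈ U := by
    simp only [hU, Set.mem_setOf_eq, hFx, hfx]
    norm_num
  have hpre : stoneCechUnit ⁻¹' U = C := by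
    ext y
    have hFy : F (stoneCechUnit y) = f y := congrFun (stoneCechExtend_extends hfc) y
    simp only [hU, hC, Set.mem_preimage, Set.mem_setOf_eq, hFy]
  have hUsub : U ⊆ closure (stoneCechUnit '' C) := by
    have h3 := denseRange_stoneCechUnit.open_subset_closure_inter (t := U) hUopen
    have h4 : U ∩ Set.range stoneCechUnit = stoneCechUnit '' C := by
      rw [← hpre, Set.image_preimage_eq_inter_range]
    rwa [h4] at h3
  have : stoneCechUnit x ∈ interior (closure (stoneCechUnit '' C)) :=
    interior_maximal hUsub hUopen hxU
  exact Set.mem_biUnion ⟨hCcoz, hPclC⟩ this
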